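/- Let F : Ω → Y be Gâteaux differentiable on the open set Ω ⊆ X, and suppose its derivative F′ : Ω → L(X,Y) satisfies the radius Lipschitz condition of center x* with L average on U ⊆ Ω. Then for every x ∈ U one has ‖F(x*) − F(x) − F′(x)(x* − x)‖ ≤ ∫₀^{‖x−x*‖} L(u)·u du. -/

import Mathlib

open scoped ENNReal

open MeasureTheory intervalIntegral Set Filter

set_option maxHeartbeats 1000000

/-- If `F` is Gâteaux differentiable on the open set `Ω` and its derivative `F'`
satisfies the radius Lipschitz condition of center `x*` with `L` average on the
star-shaped set `U ⊆ Ω`, then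
`‖F(x*) − F(x) − F′(x)(x* − x)‖ ≤ ∫₀^{‖x−x*‖} L(u)·u du` for every `x ∈ U`. -/
theorem stmt_0 {X Y : Type*} [NormedAddCommGroup X] [InnerProductSpace ℝ X]
    [NormedAddCommGroup Y] [InnerProductSpace ℝ Y]
    (Ω U : Set X) (hΩopen : IsOpen Ω) (hΩne : Ω.Nonempty) (hUΩ : U ⊆ Ω)
    (xs : X) (hxsU : xs ∈ U)
    -- `U` is star-shaped with respect to `x*`
    (hstar : ∀ x ∈ U, ∀ t ∈ Set.Icc (0:ℝ) 1, xs + t • (x - xs) ∈ U)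
    -- `R ∈ (0,+∞]` bounds `sup_{x ∈ U} ‖x − x*‖`
    (R : ℝ≥0∞) (hR : 0 < R) (hsup : ∀ x ∈ U, (‖x - xs‖₊ : ℝ≥0∞) ≤ R)
    -- `L : [0,R) → ℝ` is positive and continuous
    (L : ℝ → ℝ)
    (hLpos : ∀ u : ℝ, 0 ≤ u → ENNReal.ofReal u < R → 0 < L u)
    (hLcont : ContinuousOn L {u : ℝ | 0 ≤ u ∧ ENNReal.ofReal u < R})
    (F : X → Y) (F' : X → (X →L[ℝ] Y))
    -- `F` is Gâteaux differentiable on `Ω` with derivative `F'`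
    (hdiff : ∀ x ∈ Ω, ∀ v : X,
      Filter.Tendsto (fun t : ℝ => t⁻¹ • (F (x + t • v) - F x))
        (nhdsWithin (0:ℝ) {(0:ℝ)}ᶜ) (nhds (F' x v)))
    -- `F'` satisfies the radius Lipschitz condition of center `x*` with `L` average on `U`
    (hrad : ∀ x ∈ U, ∀ t ∈ Set.Icc (0:ℝ) 1,
      ‖F' x - F' (xs + t • (x - xs))‖ ≤ ∫ u in t * ‖x - xs‖..‖x - xs‖, L u)
    (x : X) (hx : x ∈ U) :
    ‖F xs - F x - F' x (xs - x)‖ ≤ ∫ u in (0:ℝ)..‖x - xs‖, L u * u := by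
  set v : X := x - xs with hv
  set r : ℝ := ‖v‖ with hrdef
  have hr0 : 0 ≤ r := norm_nonneg _
  rcases eq_or_lt_of_le hr0 with hr0' | hrpos
  · -- degenerate case `x = x*`
    have hv0 : v = 0 := by simpa [hrdef] using hr0'.symm
    have hxeq : x = xs := sub_eq_zero.mp hv0
    rw [hxeq]
    simp [hrdef, hv0]
  -- From now on `0 < r`.
  have hofr : ENNReal.ofReal r ≤ R := by
    rw [hrdef, hv, ofReal_norm]
    exact hsup x hx
  have hdom : ∀ u : ℝ, 0 ≤ u → u < r → u ∈ {u : ℝ | 0 ≤ u ∧ ENNReal.ofReal u < R} := by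
    intro u hu hur
    exact ⟨hu, lt_of_lt_of_le ((ENNReal.ofReal_lt_ofReal_iff hrpos).mpr hur) hofr⟩
  -- integrability of `L` on any `[0,c]` with `c < r`
  have hLint_sub : ∀ c : ℝ, 0 ≤ c → c < r → IntervalIntegrable L volume 0 c := by
    intro c hc hcr
    apply ContinuousOn.intervalIntegrable
    apply hLcont.mono
    intro u hu
    rw [uIcc_of_le hc] at hu
    exact hdom u hu.1 (lt_of_le_of_lt hu.2 hcr)
  -- the curve and its basic properties
  have hγU : ∀ t ∈ Set.Icc (0:ℝ) 1, xs + t • v ∈ U := hstar x hx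
  have hγ1 : xs + (1:ℝ) • v = x := by rw [one_smul, hv]; abel
  have hγ0 : xs + (0:ℝ) • v = xs := by simp
  -- Gâteaux differentiability along the segment
  have hg : ∀ t ∈ Set.Icc (0:ℝ) 1,
      HasDerivAt (fun s : ℝ => F (xs + s • v)) (F' (xs + t • v) v) t := by
    intro t ht
    have hmem : xs + t • v ∈ Ω := hUΩ (hγU t ht)
    have H := hdiff _ hmem v
    rw [hasDerivAt_iff_tendsto_slope]
    have hmap : Tendsto (fun s : ℝ => s - t) (nhdsWithin t {t}ᶜ) (nhdsWithin 0 {(0:ℝ)}ᶜ) := by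
      rw [tendsto_nhdsWithin_iff]
      constructor
      · have : Tendsto (fun s : ℝ => s - t) (nhds t) (nhds (t - t)) :=
          (continuous_id.sub continuous_const).tendsto t
        simpa using this.mono_left nhdsWithin_le_nhds
      · exact eventually_mem_nhdsWithin.mono fun s hs => sub_ne_zero.mpr hs
    have hcomp := H.comp hmap
    refine Tendsto.congr (fun s => ?_) hcomp
    have harg : xs + t • v + (s - t) • v = xs + s • v := by
      rw [sub_smul]; abel
    simp only [Function.comp, harg, slope_def_module]
  -- embed `Y` into its completion, which is a complete space
  set e : Y →L[ℝ] UniformSpace.Completion Y := UniformSpace.Completion.toComplL with hedef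
  have he : ∀ y : Y, ‖e y‖ = ‖y‖ := fun y => UniformSpace.Completion.norm_coe y
  have heinj : Function.Injective e := by
    rw [hedef]
    rw [UniformSpace.Completion.coe_toComplL]
    exact UniformSpace.Completion.coe_injective Y
  have hge : ∀ t ∈ Set.Icc (0:ℝ) 1,
      HasDerivAt (fun s : ℝ => e (F (xs + s • v))) (e (F' (xs + t • v) v)) t := by
    intro t ht
    exact e.hasFDerivAt.comp_hasDerivAt t (hg t ht)
  -- key estimate along the segment, from the radius Lipschitz condition
  have hsegEst : ∀ a b : ℝ, 0 ≤ a → a ≤ b → b ≤ 1 →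
      ‖F' (xs + b • v) - F' (xs + a • v)‖ ≤ ∫ u in a * r..b * r, L u := by
    intro a b ha hab hb1
    rcases eq_or_lt_of_le (ha.trans hab) with hb0 | hb0
    · have ha0 : a = 0 := le_antisymm (hab.trans hb0.symm.le) ha
      rw [ha0, ← hb0]
      simp
    · have hbU : xs + b • v ∈ U := hγU b ⟨ha.trans hab, hb1⟩
      have ht : a / b ∈ Set.Icc (0:ℝ) 1 :=
        ⟨div_nonneg ha hb0.le, (div_le_one hb0).mpr hab⟩
      have h := hrad _ hbU (a / b) ht
      have e1 : xs + b • v - xs = b • v := by abel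
      have e2 : (a / b) • (b • v) = a • v := by
        rw [smul_smul, div_mul_cancel₀ _ (ne_of_gt hb0)]
      have e3 : ‖b • v‖ = b * r := by
        rw [norm_smul, Real.norm_eq_abs, abs_of_nonneg hb0.le]
      rw [e1, e2, e3] at h
      have e4 : a / b * (b * r) = a * r := by field_simp
      rwa [e4] at h
  by_cases hA : IntervalIntegrable L volume 0 r
  · -- main case : `L` is integrable on `[0,r]`
    set Φ : ℝ → ℝ := fun s => ∫ u in (0:ℝ)..s, L u with hΦ
    have hΦcont : ContinuousOn Φ (Set.Icc 0 r) := by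
      have := continuousOn_primitive_interval' hA (left_mem_uIcc (a := (0:ℝ)) (b := r))
      rwa [uIcc_of_le hr0] at this
    have hΦsub : ∀ a b : ℝ, 0 ≤ a → a ≤ b → b ≤ r →
        (∫ u in a..b, L u) = Φ b - Φ a := by
      intro a b ha hab hbr
      refine (integral_interval_sub_left ?_ ?_).symm
      · refine hA.mono_set ?_
        rw [uIcc_of_le hr0, uIcc_of_le (ha.trans hab)]
        exact Set.Icc_subset_Icc le_rfl hbr
      · refine hA.mono_set ?_
        rw [uIcc_of_le hr0, uIcc_of_le ha]
        exact Set.Icc_subset_Icc le_rfl (hab.trans hbr)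
    set G : ℝ → (X →L[ℝ] Y) := fun t => F' (xs + t • v) with hG
    have hGest : ∀ a b : ℝ, a ∈ Set.Icc (0:ℝ) 1 → b ∈ Set.Icc (0:ℝ) 1 →
        ‖G b - G a‖ ≤ |Φ (b * r) - Φ (a * r)| := by
      intro a b ha hb
      rcases le_total a b with hab | hab
      · have := hsegEst a b ha.1 hab hb.2
        rw [hΦsub (a * r) (b * r) (mul_nonneg ha.1 hr0)
          (mul_le_mul_of_nonneg_right hab hr0) (mul_le_of_le_one_left hr0 hb.2)] at this
        exact this.trans (le_abs_self _)
      · have := hsegEst b a hb.1 hab ha.2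
        rw [hΦsub (b * r) (a * r) (mul_nonneg hb.1 hr0)
          (mul_le_mul_of_nonneg_right hab hr0) (mul_le_of_le_one_left hr0 ha.2)] at this
        rw [norm_sub_rev]
        refine this.trans ?_
        rw [abs_sub_comm]
        exact le_abs_self _
    have hGcont : ContinuousOn G (Set.Icc 0 1) := by
      intro t ht
      have hmul : ContinuousWithinAt (fun s : ℝ => Φ (s * r)) (Set.Icc 0 1) t := by
        refine ContinuousOn.continuousWithinAt ?_ ht
        refine hΦcont.comp (continuous_mul_right r).continuousOn ?_
        intro s hs
        exact ⟨mul_nonneg hs.1 hr0, mul_le_of_le_one_left hr0 hs.2⟩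
      rw [ContinuousWithinAt, tendsto_iff_norm_sub_tendsto_zero]
      have hmul' : Tendsto (fun s : ℝ => Φ (s * r)) (nhdsWithin t (Set.Icc 0 1))
          (nhds (Φ (t * r))) := hmul
      have habs : Tendsto (fun s => |Φ (s * r) - Φ (t * r)|) (nhdsWithin t (Set.Icc 0 1))
          (nhds 0) := by
        have := (hmul'.sub (tendsto_const_nhds (x := Φ (t * r)))).abs
        simpa using this
      refine squeeze_zero' (Eventually.of_forall fun s => norm_nonneg _) ?_ habs
      filter_upwards [eventually_mem_nhdsWithin] with s hs
      exact hGest t s ht hs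
    have hGvcont : ContinuousOn (fun t => e (G t v)) (Set.Icc 0 1) :=
      e.continuous.comp_continuousOn
        ((ContinuousLinearMap.apply ℝ Y v).continuous.comp_continuousOn hGcont)
    have hgint : IntervalIntegrable (fun t => e (G t v)) volume 0 1 := by
      apply ContinuousOn.intervalIntegrable
      rwa [uIcc_of_le zero_le_one]
    have hFTC : ∫ t in (0:ℝ)..1, e (G t v) = e (F x) - e (F xs) := by
      rw [intervalIntegral.integral_eq_sub_of_hasDerivAt
        (f := fun s : ℝ => e (F (xs + s • v)))
        (fun t ht => by
          rw [uIcc_of_le zero_le_one] at ht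
          exact hge t ht) hgint]
      rw [hγ1, hγ0]
    have hkey : e (F xs) - e (F x) - e (F' x (xs - x))
        = ∫ t in (0:ℝ)..1, (e (F' x v) - e (G t v)) := by
      rw [intervalIntegral.integral_sub intervalIntegrable_const hgint, hFTC,
        intervalIntegral.integral_const]
      have hxsx : xs - x = -v := by rw [hv]; abel
      rw [hxsx, map_neg (F' x), map_neg e]
      simp only [sub_zero, one_smul]
      abel
    have hnorm : ‖F xs - F x - F' x (xs - x)‖
        = ‖e (F xs) - e (F x) - e (F' x (xs - x))‖ := by
      rw [← map_sub, ← map_sub, he]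
    rw [hnorm, hkey]
    have hbound : ∀ t ∈ Set.Icc (0:ℝ) 1,
        ‖e (F' x v) - e (G t v)‖ ≤ (Φ r - Φ (t * r)) * r := by
      intro t ht
      rw [← map_sub, he]
      have h1 : ‖F' x v - G t v‖ ≤ ‖F' x - G t‖ * ‖v‖ := by
        have := (F' x - G t).le_opNorm v
        rwa [ContinuousLinearMap.sub_apply] at this
      have h2 := hrad x hx t ht
      rw [← hv, ← hrdef] at h2
      have h3 : (∫ u in t * r..r, L u) = Φ r - Φ (t * r) :=
        hΦsub (t * r) r (mul_nonneg ht.1 hr0) (mul_le_of_le_one_left hr0 ht.2) le_rfl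
      rw [h3] at h2
      calc ‖F' x v - G t v‖ ≤ ‖F' x - G t‖ * r := h1
        _ ≤ (Φ r - Φ (t * r)) * r := by
            apply mul_le_mul_of_nonneg_right _ hr0
            exact h2
    have hΦr_cont : ContinuousOn (fun t : ℝ => (Φ r - Φ (t * r)) * r) (Set.Icc 0 1) := by
      refine ContinuousOn.mul ?_ continuousOn_const
      refine continuousOn_const.sub ?_
      refine hΦcont.comp (continuous_mul_right r).continuousOn ?_
      intro s hs
      exact ⟨mul_nonneg hs.1 hr0, mul_le_of_le_one_left hr0 hs.2⟩
    calc ‖∫ t in (0:ℝ)..1, (e (F' x v) - e (G t v))‖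
        ≤ ∫ t in (0:ℝ)..1, ‖e (F' x v) - e (G t v)‖ :=
          intervalIntegral.norm_integral_le_integral_norm zero_le_one
      _ ≤ ∫ t in (0:ℝ)..1, (Φ r - Φ (t * r)) * r := by
          apply intervalIntegral.integral_mono_on zero_le_one _ _ hbound
          · apply ContinuousOn.intervalIntegrable
            rw [uIcc_of_le zero_le_one]
            exact (continuousOn_const.sub hGvcont).norm
          · apply ContinuousOn.intervalIntegrable
            rwa [uIcc_of_le zero_le_one]
      _ = ∫ s in (0:ℝ)..r, (Φ r - Φ s) := by
          have h1 : (∫ t in (0:ℝ)..1, (Φ r - Φ (t * r)) * r)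
              = r • ∫ t in (0:ℝ)..1, (Φ r - Φ (t * r)) := by
            rw [← intervalIntegral.integral_smul]
            congr 1
            funext t
            rw [smul_eq_mul, mul_comm]
          rw [h1, show (r • ∫ t in (0:ℝ)..1, (Φ r - Φ (t * r)))
            = ∫ s in (0:ℝ)*r..1*r, (Φ r - Φ s) from
            intervalIntegral.smul_integral_comp_mul_right (fun s => Φ r - Φ s) r]
          norm_num
      _ = ∫ u in (0:ℝ)..r, L u * u := by
          -- both sides equal `r * Φ r - ∫₀^r Φ`
          have hΦint : IntervalIntegrable Φ volume 0 r := by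
            apply ContinuousOn.intervalIntegrable
            rwa [uIcc_of_le hr0]
          have hleft : (∫ s in (0:ℝ)..r, (Φ r - Φ s)) = r * Φ r - ∫ s in (0:ℝ)..r, Φ s := by
            rw [intervalIntegral.integral_sub intervalIntegrable_const hΦint,
              intervalIntegral.integral_const]
            simp [smul_eq_mul, mul_comm]
          -- FTC for the right side
          have hLO : ContinuousOn L (Set.Ioo 0 r) := by
            apply hLcont.mono
            intro u hu
            exact hdom u hu.1.le hu.2
          have hΦO : ContinuousOn Φ (Set.Ioo 0 r) := hΦcont.mono Set.Ioo_subset_Icc_self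
          have hderiv : ∀ s ∈ Set.Ioo (0:ℝ) r,
              HasDerivWithinAt (fun s => s * Φ s - ∫ u in (0:ℝ)..s, Φ u)
                (L s * s) (Set.Ioi s) s := by
            intro s hs
            have hsub : Set.uIcc 0 s ⊆ Set.uIcc 0 r := by
              rw [uIcc_of_le hr0, uIcc_of_le hs.1.le]
              exact Set.Icc_subset_Icc le_rfl hs.2.le
            have hΦd : HasDerivAt Φ (L s) s := by
              apply intervalIntegral.integral_hasDerivAt_right (hA.mono_set hsub)
                (ContinuousOn.stronglyMeasurableAtFilter isOpen_Ioo hLO s hs)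
              exact hLO.continuousAt (isOpen_Ioo.mem_nhds hs)
            have hPd : HasDerivAt (fun s => ∫ u in (0:ℝ)..s, Φ u) (Φ s) s := by
              apply intervalIntegral.integral_hasDerivAt_right (hΦint.mono_set hsub)
                (ContinuousOn.stronglyMeasurableAtFilter isOpen_Ioo hΦO s hs)
              exact hΦO.continuousAt (isOpen_Ioo.mem_nhds hs)
            have hmul : HasDerivAt (fun s => s * Φ s) (1 * Φ s + s * L s) s :=
              (hasDerivAt_id s).mul hΦd
            have := (hmul.sub hPd).hasDerivWithinAt (s := Set.Ioi s)
            rw [show L s * s = 1 * Φ s + s * L s - Φ s by ring]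
            exact this
          have hcont2 : ContinuousOn (fun s => s * Φ s - ∫ u in (0:ℝ)..s, Φ u)
              (Set.Icc 0 r) := by
            refine ContinuousOn.sub (continuousOn_id.mul hΦcont) ?_
            have := continuousOn_primitive_interval'
              hΦint (left_mem_uIcc (a := (0:ℝ)) (b := r))
            rwa [uIcc_of_le hr0] at this
          have hf'int : IntervalIntegrable (fun u => L u * u) volume 0 r :=
            hA.mul_continuousOn continuousOn_id
          have := intervalIntegral.integral_eq_sub_of_hasDeriv_right_of_le hr0
            hcont2 hderiv hf'int
          rw [this, hleft]
          simp
  · -- degenerate case : `L` is not integrable on `[0,r]`; the derivative is constant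
    have hzero : ∀ t : ℝ, 0 ≤ t → t < 1 → (∫ u in t * r..r, L u) = 0 := by
      intro t ht ht1
      apply intervalIntegral.integral_undef
      intro h
      exact hA ((hLint_sub (t * r) (mul_nonneg ht hr0) (by nlinarith)).trans h)
    have hconst : ∀ t ∈ Set.Icc (0:ℝ) 1, F' (xs + t • v) = F' x := by
      intro t ht
      rcases eq_or_lt_of_le ht.2 with h1 | h1
      · rw [h1, hγ1]
      · have h := hrad x hx t ht
        rw [← hv, ← hrdef, hzero t ht.1 h1] at h
        have : F' x - F' (xs + t • v) = 0 := by
          have := norm_le_zero_iff.mp h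
          exact this
        exact (sub_eq_zero.mp this).symm
    have hFTC : F' x v = F x - F xs := by
      have h := intervalIntegral.integral_eq_sub_of_hasDerivAt
        (f := fun s : ℝ => e (F (xs + s • v))) (f' := fun _ : ℝ => e (F' x v))
        (fun t ht => by
          rw [uIcc_of_le zero_le_one] at ht
          have := hge t ht
          rwa [hconst t ht] at this)
        intervalIntegrable_const
      have hγ1' : xs + v = x := by rw [hv]; abel
      apply heinj
      have hms : e (F x - F xs) = e (F x) - e (F xs) := map_sub e _ _
      rw [hms]
      simpa [hγ1'] using h
    have hLHS : F xs - F x - F' x (xs - x) = 0 := by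
      have hxsx : xs - x = -v := by rw [hv]; abel
      rw [hxsx, map_neg, hFTC]
      abel
    rw [hLHS, norm_zero]
    -- the right-hand side is nonnegative
    apply intervalIntegral.integral_nonneg_of_ae_restrict hr0
    have h1 : ∀ᵐ u ∂(volume.restrict (Set.Icc 0 r)), u ∈ Set.Icc (0:ℝ) r :=
      ae_restrict_mem measurableSet_Icc
    have h2 : ∀ᵐ u ∂(volume.restrict (Set.Icc 0 r)), u ≠ r := by
      apply ae_restrict_of_ae
      have hset : ({r} : Set ℝ) = {u : ℝ | ¬ u ≠ r} := by ext u; simp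
      rw [ae_iff, ← hset]
      exact Real.volume_singleton
    filter_upwards [h1, h2] with u hu hne
    rcases eq_or_lt_of_le hu.1 with h0 | h0
    · simp [← h0]
    · have hur : u < r := lt_of_le_of_ne hu.2 hne
      have := hLpos u hu.1 (hdom u hu.1 hur).2
      positivity
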